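/- arXiv:1804.02095 — 6 statements merged into one kernel-verified Lean document; each statement's English description precedes it below -/
import Mathlib

section
/- Let ψ : ℝ → ℂ^d be differentiable with ‖ψ(t)‖ = 1 for all t, let P(t) = ψ(t) ψ(t)* (an orthogonal projection), and assume P is differentiable. Let c : ℝ → ℂ be differentiable with |c(t)| = 1 for all t, and set φ(t) = c(t) ψ(t). Then ‖φ̇(t)‖² = ‖P(t) φ̇(t)‖² + ‖Ṗ(t) ψ(t)‖²; in particular ‖φ̇(t)‖² ≥ ‖Ṗ(t) ψ(t)‖², where the right-hand side is independent of the gauge c, and equality holds at time t if and only if P(t) φ̇(t) = 0. -/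
open scoped Matrix Matrix.Norms.L2Operator InnerProductSpace
open Matrix Set

lemma aux1 {d : ℕ} (u v x : EuclideanSpace ℂ (Fin d)) :
    toEuclideanLin (vecMulVec u (star (v : ∀ _ : Fin d, ℂ))) x = ⟪v, x⟫_ℂ • u := by
  ext i
  simp [toEuclideanLin_apply, mulVec, vecMulVec, dotProduct, PiLp.inner_apply,
    Finset.mul_sum, mul_comm, mul_left_comm, RCLike.inner_apply]

/-- Gauge optimality: for `φ = c ψ` with `|c| = 1` and `P = ψψ*`,
`‖φ̇‖² = ‖P φ̇‖² + ‖Ṗ ψ‖² ≥ ‖Ṗ ψ‖²`, with equality iff `P φ̇ = 0`. -/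
theorem stmt_3 {d : ℕ} (ψ ψ' : ℝ → EuclideanSpace ℂ (Fin d)) (c c' : ℝ → ℂ)
    (hψ : ∀ t, HasDerivAt ψ (ψ' t) t)
    (hnorm : ∀ t, ‖ψ t‖ = 1)
    (hc : ∀ t, HasDerivAt c (c' t) t)
    (hcu : ∀ t, ‖c t‖ = 1) :
    ∀ t : ℝ,
      let P : Matrix (Fin d) (Fin d) ℂ := vecMulVec (ψ t) (star (ψ t : ∀ _ : Fin d, ℂ))
      let Pdot : Matrix (Fin d) (Fin d) ℂ :=
        vecMulVec (ψ' t) (star (ψ t : ∀ _ : Fin d, ℂ))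
          + vecMulVec (ψ t) (star (ψ' t : ∀ _ : Fin d, ℂ))
      let φdot : EuclideanSpace ℂ (Fin d) := c' t • ψ t + c t • ψ' t
      ‖φdot‖ ^ 2 = ‖toEuclideanLin P φdot‖ ^ 2 + ‖toEuclideanLin Pdot (ψ t)‖ ^ 2 ∧
      ‖toEuclideanLin Pdot (ψ t)‖ ^ 2 ≤ ‖φdot‖ ^ 2 ∧
      (‖φdot‖ ^ 2 = ‖toEuclideanLin Pdot (ψ t)‖ ^ 2 ↔ toEuclideanLin P φdot = 0) := by
  intro t P Pdot φdot
  set a : ℂ := ⟪ψ t, ψ' t⟫_ℂ with ha_def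
  have hself : ⟪ψ t, ψ t⟫_ℂ = 1 := by
    rw [inner_self_eq_norm_sq_to_K, hnorm t]; norm_num
  -- derivative of constant inner product
  have hconst : (fun s => ⟪ψ s, ψ s⟫_ℂ) = fun _ => (1 : ℂ) := by
    funext s
    rw [inner_self_eq_norm_sq_to_K, hnorm s]; norm_num
  have hderiv : HasDerivAt (fun s => ⟪ψ s, ψ s⟫_ℂ) (⟪ψ t, ψ' t⟫_ℂ + ⟪ψ' t, ψ t⟫_ℂ) t :=
    (hψ t).inner ℂ (hψ t)
  rw [hconst] at hderiv
  have hzero : a + ⟪ψ' t, ψ t⟫_ℂ = 0 := by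
    simpa [ha_def] using hderiv.unique (hasDerivAt_const t (1 : ℂ))
  have hconj : ⟪ψ' t, ψ t⟫_ℂ = -a := by linear_combination hzero
  -- compute P φdot
  have hP : toEuclideanLin P φdot = (c' t + c t * a) • ψ t := by
    show toEuclideanLin (vecMulVec (ψ t) (star (ψ t : ∀ _ : Fin d, ℂ))) φdot = _
    rw [aux1]
    congr 1
    show ⟪ψ t, c' t • ψ t + c t • ψ' t⟫_ℂ = _
    rw [inner_add_right, inner_smul_right, inner_smul_right, hself, ← ha_def]
    ring
  -- compute Pdot ψ
  have hPdot : toEuclideanLin Pdot (ψ t) = ψ' t - a • ψ t := by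
    show toEuclideanLin (vecMulVec (ψ' t) (star (ψ t : ∀ _ : Fin d, ℂ))
        + vecMulVec (ψ t) (star (ψ' t : ∀ _ : Fin d, ℂ))) (ψ t) = _
    rw [map_add, LinearMap.add_apply, aux1, aux1, hself, hconj]
    module
  have hw : φdot - toEuclideanLin P φdot = c t • (ψ' t - a • ψ t) := by
    rw [hP]
    show (c' t • ψ t + c t • ψ' t) - (c' t + c t * a) • ψ t = _
    module
  have hnc : ‖c t‖ = 1 := by exact hcu t
  have hwnorm : ‖φdot - toEuclideanLin P φdot‖ = ‖toEuclideanLin Pdot (ψ t)‖ := by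
    rw [hw, hPdot, norm_smul, hnc, one_mul]
  have horth : ⟪toEuclideanLin P φdot, φdot - toEuclideanLin P φdot⟫_ℂ = 0 := by
    rw [hw, hP, inner_smul_left, inner_smul_right, inner_sub_right, inner_smul_right, hself]
    ring
  have hpyth : ‖φdot‖ ^ 2 = ‖toEuclideanLin P φdot‖ ^ 2 + ‖toEuclideanLin Pdot (ψ t)‖ ^ 2 := by
    have := norm_add_sq_eq_norm_sq_add_norm_sq_of_inner_eq_zero _ _ horth
    rw [add_sub_cancel, hwnorm] at this
    rw [pow_two, pow_two, pow_two]
    exact this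
  refine ⟨hpyth, by nlinarith [sq_nonneg ‖toEuclideanLin P φdot‖], ?_⟩
  constructor
  · intro h
    have : ‖toEuclideanLin P φdot‖ ^ 2 = 0 := by linarith
    have := pow_eq_zero_iff (n := 2) (by norm_num) |>.mp this
    exact norm_eq_zero.mp this
  · intro h
    rw [hpyth, h]
    simp
end

section
/- Let ε > 0 and let P : ℝ → Matrix (Fin d) (Fin d) ℂ be a continuously differentiable family of Hermitian projectors (P(t)² = P(t), P(t)* = P(t)). Define 𝒜(t) = iε [Ṗ(t), P(t)] and let 𝒯 solve iε ∂ₜ𝒯(t) = 𝒜(t) 𝒯(t) with 𝒯(0) = I. Then P(t) 𝒯(t) = 𝒯(t) P(0) for all t. -/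
open scoped Matrix Matrix.Norms.L2Operator InnerProductSpace
open Matrix Set

/-- Grönwall-type vanishing lemma: a solution of a linearly bounded ODE
vanishing at `0` vanishes at `b ≥ 0`. -/
lemma aux_gronwall_zero {d : ℕ} (f f' : ℝ → Matrix (Fin d) (Fin d) ℂ)
    (hf : ∀ s, HasDerivAt f (f' s) s) (K b : ℝ) (hb : 0 ≤ b)
    (hbd : ∀ s ∈ Icc (0:ℝ) b, ‖f' s‖ ≤ K * ‖f s‖)
    (h0 : f 0 = 0) : f b = 0 := by
  have key := norm_le_gronwallBound_of_norm_deriv_right_le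
    (f := f) (f' := f') (δ := 0) (K := K) (ε := 0) (a := 0) (b := b)
    (fun s _ => (hf s).continuousAt.continuousWithinAt)
    (fun s _ => (hf s).hasDerivWithinAt)
    (by simp [h0])
    (fun s hs => by simpa using hbd s (Ico_subset_Icc_self hs))
  have h := key b ⟨hb, le_refl b⟩
  rw [gronwallBound_ε0] at h
  simp only [zero_mul] at h
  exact norm_le_zero_iff.mp h

/-- If `f' = B f` with `B` continuous and `f 0 = 0`, then `f ≡ 0`. -/
lemma aux_linear_ode_zero {d : ℕ} (B f : ℝ → Matrix (Fin d) (Fin d) ℂ)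
    (hB : Continuous B)
    (hf : ∀ s, HasDerivAt f (B s * f s) s)
    (h0 : f 0 = 0) : ∀ t, f t = 0 := by
  intro t
  rcases le_or_gt 0 t with ht | ht
  · obtain ⟨K, hK⟩ := (isCompact_Icc (a := (0:ℝ)) (b := t)).exists_bound_of_continuousOn
      hB.continuousOn
    exact aux_gronwall_zero f (fun s => B s * f s) hf K t ht
      (fun s hs => le_trans (norm_mul_le _ _)
        (mul_le_mul_of_nonneg_right (hK s hs) (norm_nonneg _))) h0
  · -- time reversal
    set g : ℝ → Matrix (Fin d) (Fin d) ℂ := fun s => f (-s) with hg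
    have hg' : ∀ s, HasDerivAt g ((-B (-s)) * g s) s := by
      intro s
      have h1 : HasDerivAt (fun x : ℝ => -x) (-1 : ℝ) s := (hasDerivAt_id s).neg
      have h2 := (hf (-s)).scomp s h1
      simp only [neg_smul, one_smul] at h2
      rw [neg_mul]
      exact h2
    obtain ⟨K, hK⟩ := (isCompact_Icc (a := (0:ℝ)) (b := -t)).exists_bound_of_continuousOn
      (Continuous.continuousOn (f := fun s => -B (-s)) (by fun_prop))
    have := aux_gronwall_zero g (fun s => (-B (-s)) * g s) hg' K (-t) (by linarith)
      (fun s hs => le_trans (norm_mul_le _ _)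
        (mul_le_mul_of_nonneg_right (hK s hs) (norm_nonneg _)))
      (by simp [hg, h0])
    simpa [hg] using this

/-- Intertwining property of the parallel transport evolution operator:
if `𝒜(t) = iε [Ṗ(t), P(t)]` and `iε ∂ₜ𝒯 = 𝒜 𝒯`, `𝒯(0) = I`, then `P(t) 𝒯(t) = 𝒯(t) P(0)`. -/
theorem stmt_5 {d : ℕ} (ε : ℝ) (hε : 0 < ε)
    (P P' : ℝ → Matrix (Fin d) (Fin d) ℂ)
    (hP : ∀ t, HasDerivAt P (P' t) t)
    (hP'c : Continuous P')
    (hproj : ∀ t, P t * P t = P t)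
    (hherm : ∀ t, (P t)ᴴ = P t)
    (U U' : ℝ → Matrix (Fin d) (Fin d) ℂ)
    (hderiv : ∀ t, HasDerivAt U (U' t) t)
    (hODE : ∀ t, (Complex.I * ε) • U' t =
      ((Complex.I * ε) • (P' t * P t - P t * P' t)) * U t)
    (hinit : U 0 = 1) :
    ∀ t : ℝ, P t * U t = U t * P 0 := by
  set A : ℝ → Matrix (Fin d) (Fin d) ℂ := fun t => P' t * P t - P t * P' t with hA
  have hne : (Complex.I * ε : ℂ) ≠ 0 :=
    mul_ne_zero Complex.I_ne_zero (by exact_mod_cast hε.ne')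
  have hU' : ∀ t, U' t = A t * U t := by
    intro t
    apply smul_right_injective (Matrix (Fin d) (Fin d) ℂ) hne
    show (Complex.I * (ε:ℂ)) • U' t = (Complex.I * (ε:ℂ)) • (A t * U t)
    rw [hODE t, smul_mul_assoc]
  -- Leibniz rule from P² = P
  have hLeib : ∀ t, P' t * P t + P t * P' t = P' t := by
    intro t
    have h1 : HasDerivAt (fun s => P s * P s) (P' t * P t + P t * P' t) t :=
      (hP t).mul (hP t)
    have h2 : HasDerivAt (fun s => P s * P s) (P' t) t := by
      have he : (fun s => P s * P s) = P := funext fun s => hproj s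
      rw [he]; exact hP t
    exact h1.unique h2
  have hPPP : ∀ t, P t * P' t * P t = 0 := by
    intro t
    have h := congrArg (fun M => P t * M) (hLeib t)
    simp only [mul_add, ← mul_assoc, hproj t] at h
    -- h : P t * P' t * P t + P t * P' t = P t * P' t
    have := congrArg (fun M => M - P t * P' t) h
    simpa [add_sub_cancel_right] using this
  -- key intertwining identity: P' + P A = A P
  have hkey : ∀ t, P' t + P t * A t = A t * P t := by
    intro t
    have hPA : P t * A t = -(P t * P' t) := by
      simp only [hA, mul_sub, ← mul_assoc, hproj t, hPPP t]
      simp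
    have hAP : A t * P t = P' t * P t := by
      simp only [hA, sub_mul, mul_assoc, hproj t]
      rw [← mul_assoc, hPPP t]
      simp
    rw [hPA, hAP]
    have h := hLeib t
    rw [eq_sub_of_add_eq h]
    abel
  -- the function f = P U − U P₀ satisfies f' = A f, f 0 = 0
  set f : ℝ → Matrix (Fin d) (Fin d) ℂ := fun t => P t * U t - U t * P 0 with hf
  have hfderiv : ∀ t, HasDerivAt f (A t * f t) t := by
    intro t
    have h1 : HasDerivAt f (P' t * U t + P t * U' t - U' t * P 0) t :=
      ((hP t).mul (hderiv t)).sub ((hderiv t).mul_const (P 0))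
    have heq : P' t * U t + P t * U' t - U' t * P 0 = A t * f t := by
      rw [hU' t, hf]
      simp only [mul_sub, ← mul_assoc]
      have : P' t * U t + P t * A t * U t = A t * P t * U t := by
        rw [← add_mul, hkey t]
      rw [← this]
    rwa [heq] at h1
  have hf0 : f 0 = 0 := by simp [hf, hinit]
  have hPc : Continuous P := continuous_iff_continuousAt.mpr fun t => (hP t).continuousAt
  have hAc : Continuous A := by
    rw [hA]; exact (hP'c.mul hPc).sub (hPc.mul hP'c)
  have := aux_linear_ode_zero A f hAc hfderiv hf0
  exact fun t => sub_eq_zero.mp (this t)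
end

section
/- Let ε > 0 and let H : ℝ → Matrix (Fin d) (Fin d) ℝ be a continuous family of real symmetric matrices. Suppose (q(t), p(t)) ∈ ℝ^d × ℝ^d solves the Hamiltonian system ∂ₜq = (1/ε)[H(t)p(2 − qᵀq − pᵀp) − (qᵀH(t)q + pᵀH(t)p)p], ∂ₜp = (1/ε)[−H(t)q(2 − qᵀq − pᵀp) + (qᵀH(t)q + pᵀH(t)p)q], with normalized initial condition q(0)ᵀq(0) + p(0)ᵀp(0) = 1. Then q(t)ᵀq(t) + p(t)ᵀp(t) = 1 for all t, and φ(t) := q(t) + i p(t) solves the parallel transport dynamics iε ∂ₜφ(t) = H(t) φ(t) − φ(t)(φ(t)* H(t) φ(t)). -/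
open scoped Matrix Matrix.Norms.L2Operator InnerProductSpace
open Matrix Set

lemma eucl_apply' {d : ℕ} {𝕜 : Type*} [RCLike 𝕜] (A : Matrix (Fin d) (Fin d) 𝕜)
    (x : EuclideanSpace 𝕜 (Fin d)) (i : Fin d) :
    Matrix.toEuclideanLin A x i = ∑ j, A i j * x j := by
  simp [Matrix.toEuclideanLin_apply, Matrix.mulVec, dotProduct, WithLp.equiv,
    Equiv.refl_apply]

lemma inner_complex' {d : ℕ} (a b u v : EuclideanSpace ℝ (Fin d))
    (x y : EuclideanSpace ℂ (Fin d))
    (hx : ∀ i, x i = (a i : ℂ) + Complex.I * (b i : ℂ))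
    (hy : ∀ i, y i = (u i : ℂ) + Complex.I * (v i : ℂ)) :
    ⟪x, y⟫_ℂ
    = ((⟪a, u⟫_ℝ + ⟪b, v⟫_ℝ : ℝ) : ℂ) + Complex.I * ((⟪a, v⟫_ℝ - ⟪b, u⟫_ℝ : ℝ) : ℂ) := by
  simp only [PiLp.inner_apply, RCLike.inner_apply, RCLike.conj_to_real, hx, hy]
  push_cast
  rw [← Finset.sum_sub_distrib, ← Finset.sum_add_distrib, Finset.mul_sum, ← Finset.sum_add_distrib]
  apply Finset.sum_congr rfl
  intro i _
  simp only [map_add, Complex.conj_ofReal, _root_.map_mul, Complex.conj_I]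
  ring_nf
  rw [Complex.I_sq]
  ring

noncomputable def cplxL (d : ℕ) :
    (EuclideanSpace ℝ (Fin d) × EuclideanSpace ℝ (Fin d)) →L[ℝ] EuclideanSpace ℂ (Fin d) :=
  LinearMap.toContinuousLinearMap
  { toFun := fun x => (WithLp.toLp 2 (fun i => (x.1 i : ℂ) + Complex.I * (x.2 i : ℂ)) : EuclideanSpace ℂ (Fin d))
    map_add' := by
      intro x y
      ext i
      simp only [PiLp.add_apply, Prod.fst_add, Prod.snd_add]
      push_cast
      ring
    map_smul' := by
      intro c x
      ext i
      simp only [PiLp.smul_apply, Prod.smul_fst, Prod.smul_snd, smul_eq_mul, RingHom.id_apply,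
        Complex.real_smul]
      push_cast
      ring }

/-- The Hamiltonian form of the parallel transport dynamics: if `(q, p)` solves the
Hamiltonian system with normalized initial condition, then `qᵀq + pᵀp = 1` for all `t`
and `φ = q + i p` solves the parallel transport dynamics. -/
theorem stmt_8 {d : ℕ} (ε : ℝ) (hε : 0 < ε)
    (H : ℝ → Matrix (Fin d) (Fin d) ℝ)
    (hHc : Continuous H)
    (hsym : ∀ t, (H t).IsSymm)
    (q p q' p' : ℝ → EuclideanSpace ℝ (Fin d))
    (hq : ∀ t, HasDerivAt q (q' t) t)
    (hp : ∀ t, HasDerivAt p (p' t) t)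
    (heq1 : ∀ t, ε • q' t =
      (2 - ⟪q t, q t⟫_ℝ - ⟪p t, p t⟫_ℝ) • toEuclideanLin (H t) (p t)
        - (⟪q t, toEuclideanLin (H t) (q t)⟫_ℝ + ⟪p t, toEuclideanLin (H t) (p t)⟫_ℝ) • p t)
    (heq2 : ∀ t, ε • p' t =
      -((2 - ⟪q t, q t⟫_ℝ - ⟪p t, p t⟫_ℝ) • toEuclideanLin (H t) (q t))
        + (⟪q t, toEuclideanLin (H t) (q t)⟫_ℝ + ⟪p t, toEuclideanLin (H t) (p t)⟫_ℝ) • q t)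
    (hinit : ⟪q 0, q 0⟫_ℝ + ⟪p 0, p 0⟫_ℝ = 1) :
    ∀ t : ℝ,
      ⟪q t, q t⟫_ℝ + ⟪p t, p t⟫_ℝ = 1 ∧
      (let φ : ℝ → EuclideanSpace ℂ (Fin d) := fun s => WithLp.toLp 2 (fun i => (q s i : ℂ) + Complex.I * (p s i : ℂ))
       let φd : EuclideanSpace ℂ (Fin d) := WithLp.toLp 2 (fun i => (q' t i : ℂ) + Complex.I * (p' t i : ℂ))
       let Hc : Matrix (Fin d) (Fin d) ℂ := (H t).map (fun a => (a : ℂ))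
       HasDerivAt φ φd t ∧
       (Complex.I * ε) • φd =
         toEuclideanLin Hc (φ t) - ⟪φ t, toEuclideanLin Hc (φ t)⟫_ℂ • φ t) := by
  -- symmetry of H as a linear map
  have hsymL : ∀ t (x y : EuclideanSpace ℝ (Fin d)),
      ⟪x, toEuclideanLin (H t) y⟫_ℝ = ⟪y, toEuclideanLin (H t) x⟫_ℝ := by
    intro t x y
    have hH : (H t).IsHermitian := by
      rw [Matrix.IsHermitian]
      simpa using (hsym t).eq
    have hS := Matrix.isHermitian_iff_isSymmetric.mp hH
    rw [← hS x y, real_inner_comm]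
  -- norm conservation
  set N : ℝ → ℝ := fun t => ⟪q t, q t⟫_ℝ + ⟪p t, p t⟫_ℝ with hNdef
  have hNderiv : ∀ t, HasDerivAt N 0 t := by
    intro t
    have h1 := ((hq t).inner ℝ (hq t)).add ((hp t).inner ℝ (hp t))
    have key : ⟪q t, q' t⟫_ℝ + ⟪p t, p' t⟫_ℝ = 0 := by
      have e1 := congrArg (fun v => ⟪q t, v⟫_ℝ) (heq1 t)
      have e2 := congrArg (fun v => ⟪p t, v⟫_ℝ) (heq2 t)
      simp only [inner_smul_real_right, inner_sub_right, inner_add_right, inner_neg_right,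
        real_inner_smul_right] at e1 e2
      have hAB := hsymL t (q t) (p t)
      have hqp : ⟪q t, p t⟫_ℝ = ⟪p t, q t⟫_ℝ := real_inner_comm _ _
      have hsum : ε * (⟪q t, q' t⟫_ℝ + ⟪p t, p' t⟫_ℝ) = 0 := by
        linear_combination e1 + e2 + (2 - ⟪q t, q t⟫_ℝ - ⟪p t, p t⟫_ℝ) * hAB
          - (⟪q t, (toEuclideanLin (H t)) (q t)⟫_ℝ + ⟪p t, (toEuclideanLin (H t)) (p t)⟫_ℝ) * hqp
      have := mul_eq_zero.mp hsum
      rcases this with h | h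
      · exact absurd h (ne_of_gt hε)
      · exact h
    have : ⟪q t, q' t⟫_ℝ + ⟪q' t, q t⟫_ℝ + (⟪p t, p' t⟫_ℝ + ⟪p' t, p t⟫_ℝ) = 0 := by
      have c1 : ⟪q' t, q t⟫_ℝ = ⟪q t, q' t⟫_ℝ := real_inner_comm _ _
      have c2 : ⟪p' t, p t⟫_ℝ = ⟪p t, p' t⟫_ℝ := real_inner_comm _ _
      linarith [key, c1, c2]
    rw [this] at h1
    exact h1
  have hNconst : ∀ t, N t = 1 := by
    intro t
    have hdiff : Differentiable ℝ N := fun x => (hNderiv x).differentiableAt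
    have hd0 : ∀ x, deriv N x = 0 := fun x => (hNderiv x).deriv
    have := is_const_of_deriv_eq_zero hdiff hd0 t 0
    rw [this]
    exact hinit
  intro t
  refine ⟨hNconst t, ?_⟩
  intro φ φd Hc
  have hN1 : ⟪q t, q t⟫_ℝ + ⟪p t, p t⟫_ℝ = 1 := hNconst t
  constructor
  · exact (cplxL d).hasFDerivAt.comp_hasDerivAt t ((hq t).prodMk (hp t))
  · -- the complex ODE
    set E : ℝ := ⟪q t, toEuclideanLin (H t) (q t)⟫_ℝ + ⟪p t, toEuclideanLin (H t) (p t)⟫_ℝ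
      with hEdef
    have hHcq : ∀ i, toEuclideanLin Hc (φ t) i
        = ((toEuclideanLin (H t) (q t) i : ℝ) : ℂ)
          + Complex.I * ((toEuclideanLin (H t) (p t) i : ℝ) : ℂ) := by
      intro i
      rw [eucl_apply', show ((toEuclideanLin (H t) (q t) i : ℝ)) = ∑ j, H t i j * q t j from
        eucl_apply' _ _ _, show ((toEuclideanLin (H t) (p t) i : ℝ)) = ∑ j, H t i j * p t j from
        eucl_apply' _ _ _]
      push_cast
      rw [Finset.mul_sum, ← Finset.sum_add_distrib]
      apply Finset.sum_congr rfl
      intro j _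
      show (H t).map (fun a => (a : ℂ)) i j * φ t j = _
      simp only [Matrix.map_apply]
      show _ * ((q t j : ℂ) + Complex.I * (p t j : ℂ)) = _
      ring
    have hinner : ⟪φ t, toEuclideanLin Hc (φ t)⟫_ℂ = (E : ℂ) := by
      rw [inner_complex' (q t) (p t) (toEuclideanLin (H t) (q t)) (toEuclideanLin (H t) (p t))
        (φ t) (toEuclideanLin Hc (φ t)) (fun i => rfl) hHcq]
      rw [hsymL t (p t) (q t)]
      simp [hEdef]
    rw [hinner]
    ext i
    have h1 : ε * q' t i = toEuclideanLin (H t) (p t) i - E * p t i := by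
      have := congrArg (fun v => v i) (heq1 t)
      simp only [PiLp.smul_apply, PiLp.sub_apply, smul_eq_mul, ← hEdef] at this
      rw [this]
      rw [show (2 - ⟪q t, q t⟫_ℝ - ⟪p t, p t⟫_ℝ) = 1 by linarith [hN1]]
      ring
    have h2 : ε * p' t i = -(toEuclideanLin (H t) (q t) i) + E * q t i := by
      have := congrArg (fun v => v i) (heq2 t)
      simp only [PiLp.smul_apply, PiLp.add_apply, PiLp.neg_apply, smul_eq_mul, ← hEdef] at this
      rw [this]
      rw [show (2 - ⟪q t, q t⟫_ℝ - ⟪p t, p t⟫_ℝ) = 1 by linarith [hN1]]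
      ring
    have h1c : (ε : ℂ) * (q' t i : ℂ)
        = ((toEuclideanLin (H t) (p t) i : ℝ) : ℂ) - (E : ℂ) * (p t i : ℂ) := by
      exact_mod_cast congrArg (fun r : ℝ => (r : ℂ)) h1
    have h2c : (ε : ℂ) * (p' t i : ℂ)
        = -((toEuclideanLin (H t) (q t) i : ℝ) : ℂ) + (E : ℂ) * (q t i : ℂ) := by
      exact_mod_cast congrArg (fun r : ℝ => (r : ℂ)) h2
    show (Complex.I * ε) * ((q' t i : ℂ) + Complex.I * (p' t i : ℂ)) = _
    rw [PiLp.sub_apply, PiLp.smul_apply, hHcq i, smul_eq_mul]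
    show _ = _ - (E : ℂ) * ((q t i : ℂ) + Complex.I * (p t i : ℂ))
    linear_combination Complex.I * h1c - h2c + ((p' t i : ℂ) * ε) * Complex.I_sq
end

section
/- Let H : [0,T] → Matrix (Fin d) (Fin d) ℂ be an infinitely differentiable family of Hermitian matrices such that ‖H^{(k)}(t)‖ is bounded uniformly in t ∈ [0,T] for every k ≥ 0. Suppose there is a continuous function λ : [0,T] → ℝ such that λ(t) is a simple eigenvalue of H(t) and dist(λ(t), spec(H(t)) ∖ {λ(t)}) ≥ Δ for some Δ > 0 and all t ∈ [0,T]. Define the Riesz projector Q(t) = −(1/(2πi)) ∮_{|z−λ(t)| = Δ/2} (H(t) − z)⁻¹ dz. Then Q is infinitely differentiable on [0,T], and for every k ≥ 0 there is a constant C_k, depending only on Δ, T, and the bounds on the derivatives of H, such that ‖Q^{(k)}(t)‖ ≤ C_k for all t ∈ [0,T]. -/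
open scoped Matrix Matrix.Norms.L2Operator InnerProductSpace ContDiff
open Matrix Set

section AuxParametric

variable {E : Type*} [NormedAddCommGroup E] [NormedSpace ℝ E] [CompleteSpace E]

theorem aux_hasDerivWithinAt_intervalIntegral {F F' : ℝ → ℝ → E} {lo hi a b : ℝ}
    (hab : a ≤ b)
    (hF'c : ContinuousOn (Function.uncurry F') (Icc lo hi ×ˢ (univ : Set ℝ)))
    (hder : ∀ θ, ∀ t ∈ Icc lo hi, HasDerivWithinAt (fun u => F u θ) (F' t θ) (Icc lo hi) t)
    (hint : ∀ t ∈ Icc lo hi, IntervalIntegrable (F t) MeasureTheory.volume a b)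
    (hint' : ∀ t ∈ Icc lo hi, IntervalIntegrable (F' t) MeasureTheory.volume a b)
    {t₀ : ℝ} (ht₀ : t₀ ∈ Icc lo hi) :
    HasDerivWithinAt (fun t => ∫ θ in a..b, F t θ) (∫ θ in a..b, F' t₀ θ) (Icc lo hi) t₀ := by
  set s := Icc lo hi with hs
  rw [hasDerivWithinAt_iff_isLittleO, Asymptotics.isLittleO_iff]
  intro ε hε
  have hba : 0 < b - a + 1 := by linarith
  set ε' := ε / (b - a + 1) with hε'def
  have hε' : 0 < ε' := div_pos hε hba
  have hK : IsCompact (s ×ˢ Icc a b) := isCompact_Icc.prod isCompact_Icc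
  have huc := hK.uniformContinuousOn_of_continuous
    (hF'c.mono (prod_mono_right (subset_univ _)))
  rw [Metric.uniformContinuousOn_iff] at huc
  obtain ⟨δ, hδ, hδ'⟩ := huc ε' hε'
  filter_upwards [self_mem_nhdsWithin,
    inter_mem_nhdsWithin s (Metric.ball_mem_nhds t₀ hδ)] with t ht htball
  set s' := s ∩ Metric.ball t₀ δ with hs'
  have hs's : s' ⊆ s := inter_subset_left
  have hconv : Convex ℝ s' := (convex_Icc _ _).inter (convex_ball _ _)
  have ht₀' : t₀ ∈ s' := ⟨ht₀, Metric.mem_ball_self hδ⟩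
  have key : ∀ θ ∈ uIoc a b, ‖F t θ - F t₀ θ - (t - t₀) • F' t₀ θ‖ ≤ ε' * ‖t - t₀‖ := by
    intro θ hθ
    have hθ' : θ ∈ Icc a b := mem_Icc_of_Ioc (by rwa [uIoc_of_le hab] at hθ)
    have hmvt := Convex.norm_image_sub_le_of_norm_hasDerivWithin_le
      (f := fun u => F u θ - (u - t₀) • F' t₀ θ) (f' := fun u => F' u θ - F' t₀ θ)
      (s := s') (C := ε') ?_ ?_ hconv ht₀' htball
    · simpa [sub_right_comm] using hmvt
    · intro u hu
      exact (((hder θ u (hs's hu)).mono hs's).sub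
        (((hasDerivWithinAt_id u s').sub_const t₀).smul_const (F' t₀ θ))).congr_deriv
        (by simp)
    · intro u hu
      have := hδ' (u, θ) ⟨hs's hu, hθ'⟩ (t₀, θ) ⟨ht₀, hθ'⟩
        (by rw [Prod.dist_eq]
            exact max_lt (by simpa [dist_comm] using hu.2) (by simpa using hδ))
      simpa [dist_eq_norm] using this.le
  calc ‖(∫ θ in a..b, F t θ) - (∫ θ in a..b, F t₀ θ) - (t - t₀) • ∫ θ in a..b, F' t₀ θ‖
      = ‖∫ θ in a..b, F t θ - F t₀ θ - (t - t₀) • F' t₀ θ‖ := by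
        have h2 : IntervalIntegrable (fun θ => (t - t₀) • F' t₀ θ) MeasureTheory.volume a b :=
          (hint' t₀ ht₀).smul (t - t₀)
        rw [← intervalIntegral.integral_smul, ← intervalIntegral.integral_sub (hint t ht)
          (hint t₀ ht₀), ← intervalIntegral.integral_sub ((hint t ht).sub (hint t₀ ht₀)) h2]
    _ ≤ ε' * ‖t - t₀‖ * |b - a| :=
        intervalIntegral.norm_integral_le_of_norm_le_const key
    _ ≤ ε * ‖t - t₀‖ := by
        rw [abs_of_nonneg (by linarith)]
        have : ε' * (b - a) ≤ ε := by
          rw [hε'def, div_mul_eq_mul_div, div_le_iff₀ hba]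
          nlinarith [hε.le]
        calc ε' * ‖t - t₀‖ * (b - a) = ε' * (b - a) * ‖t - t₀‖ := by ring
          _ ≤ ε * ‖t - t₀‖ := mul_le_mul_of_nonneg_right this (norm_nonneg _)

theorem aux_integrable_slice {F : ℝ → ℝ → E} {lo hi a b : ℝ}
    (hFc : ContinuousOn (Function.uncurry F) (Icc lo hi ×ˢ (univ : Set ℝ)))
    {t : ℝ} (ht : t ∈ Icc lo hi) : IntervalIntegrable (F t) MeasureTheory.volume a b := by
  apply ContinuousOn.intervalIntegrable
  exact hFc.comp (by fun_prop : ContinuousOn (fun θ : ℝ => (t, θ)) (uIcc a b))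
    (fun θ _ => ⟨ht, mem_univ _⟩)

theorem aux_exists_partial_deriv {F : ℝ → ℝ → E} {lo hi : ℝ} (hlo : lo < hi)
    (hF : ContDiffOn ℝ ∞ (Function.uncurry F) (Icc lo hi ×ˢ (univ : Set ℝ))) :
    ∃ F' : ℝ → ℝ → E,
      ContDiffOn ℝ ∞ (Function.uncurry F') (Icc lo hi ×ˢ (univ : Set ℝ)) ∧
      ∀ θ : ℝ, ∀ t ∈ Icc lo hi, HasDerivWithinAt (fun u => F u θ) (F' t θ) (Icc lo hi) t := by
  have hs : UniqueDiffOn ℝ (Icc lo hi) := uniqueDiffOn_Icc hlo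
  have hsp : UniqueDiffOn ℝ (Icc lo hi ×ˢ (univ : Set ℝ)) := hs.prod uniqueDiffOn_univ
  set S := Icc lo hi ×ˢ (univ : Set ℝ) with hS
  refine ⟨fun t θ => fderivWithin ℝ (Function.uncurry F) S (t, θ) (1, 0), ?_, ?_⟩
  · exact (hF.fderivWithin hsp (by simp)).clm_apply contDiffOn_const
  · intro θ t ht
    have hd : DifferentiableWithinAt ℝ (Function.uncurry F) S (t, θ) :=
      hF.differentiableOn (by simp) _ ⟨ht, mem_univ _⟩
    have hι : HasDerivWithinAt (fun u : ℝ => (u, θ)) ((1 : ℝ), (0 : ℝ)) (Icc lo hi) t :=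
      (hasDerivWithinAt_id t _).prodMk (hasDerivWithinAt_const t _ θ)
    exact hd.hasFDerivWithinAt.comp_hasDerivWithinAt (x := t) hι (by intro u hu; exact ⟨hu, mem_univ _⟩ : MapsTo (fun u : ℝ => (u, θ)) (Icc lo hi) S)

theorem aux_contDiffOn_parametric_intervalIntegral {F : ℝ → ℝ → E} {lo hi a b : ℝ}
    (hlo : lo < hi) (hab : a ≤ b)
    (hF : ContDiffOn ℝ ∞ (Function.uncurry F) (Icc lo hi ×ˢ (univ : Set ℝ))) :
    ContDiffOn ℝ ∞ (fun t => ∫ θ in a..b, F t θ) (Icc lo hi) := by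
  have hs : UniqueDiffOn ℝ (Icc lo hi) := uniqueDiffOn_Icc hlo
  rw [contDiffOn_infty]
  intro n
  induction n generalizing F with
  | zero =>
    rw [show ((0 : ℕ) : WithTop ℕ∞) = 0 by rfl, contDiffOn_zero]
    obtain ⟨F', hF', hder⟩ := aux_exists_partial_deriv hlo hF
    intro t ht
    exact ((aux_hasDerivWithinAt_intervalIntegral hab hF'.continuousOn hder
      (fun u hu => aux_integrable_slice hF.continuousOn hu)
      (fun u hu => aux_integrable_slice hF'.continuousOn hu) ht).differentiableWithinAt
      ).continuousWithinAt
  | succ n ih =>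
    obtain ⟨F', hF', hder⟩ := aux_exists_partial_deriv hlo hF
    have hdint : ∀ t ∈ Icc lo hi,
        HasDerivWithinAt (fun u => ∫ θ in a..b, F u θ) (∫ θ in a..b, F' t θ) (Icc lo hi) t :=
      fun t ht => aux_hasDerivWithinAt_intervalIntegral hab hF'.continuousOn hder
        (fun u hu => aux_integrable_slice hF.continuousOn hu)
        (fun u hu => aux_integrable_slice hF'.continuousOn hu) ht
    rw [show ((n + 1 : ℕ) : WithTop ℕ∞) = (n : WithTop ℕ∞) + 1 by exact_mod_cast rfl,
      contDiffOn_succ_iff_derivWithin hs]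
    refine ⟨fun t ht => (hdint t ht).differentiableWithinAt, ?_, ?_⟩
    · intro h
      exact absurd h (by exact_mod_cast WithTop.coe_ne_top)
    · exact (ih hF').congr fun t ht => (hdint t ht).derivWithin (hs t ht)

end AuxParametric

section AuxCircle

theorem aux_circleIntegral_CLM {E F : Type*} [NormedAddCommGroup E] [NormedSpace ℂ E]
    [CompleteSpace E] [NormedAddCommGroup F] [NormedSpace ℂ F] [CompleteSpace F]
    (L : E →L[ℂ] F) {f : ℂ → E} {c : ℂ} {ρ : ℝ} (hf : CircleIntegrable f c ρ) :
    (∮ z in C(c, ρ), L (f z)) = L (∮ z in C(c, ρ), f z) := by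
  simp only [circleIntegral]
  rw [← L.intervalIntegral_comp_comm hf.out]
  congr 1
  funext θ
  rw [L.map_smul]

theorem aux_scalar_circleIntegral {w c : ℂ} {ρ : ℝ} (hρ : 0 < ρ)
    (h : ‖w - c‖ ≠ ρ) :
    (∮ z in C(c, ρ), (w - z)⁻¹) =
      if ‖w - c‖ < ρ then -(2 * Real.pi * Complex.I) else 0 := by
  rcases lt_or_gt_of_ne h with hlt | hgt
  · rw [if_pos hlt]
    have h1 : (∮ z in C(c, ρ), (w - z)⁻¹) = ∮ z in C(c, ρ), -((z - w)⁻¹) := by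
      apply circleIntegral.integral_congr hρ.le
      intro z _
      show (w - z)⁻¹ = -(z - w)⁻¹
      rw [← inv_neg, neg_sub]
    have h2 : (∮ z in C(c, ρ), -((z - w)⁻¹)) = -(∮ z in C(c, ρ), (z - w)⁻¹) := by
      simp only [circleIntegral, smul_neg, intervalIntegral.integral_neg]
    rw [h1, h2,
      circleIntegral.integral_sub_inv_of_mem_ball (by rwa [Metric.mem_ball, Complex.dist_eq])]
  · rw [if_neg (not_lt.2 hgt.le)]
    have hne : ∀ z ∈ Metric.closedBall c ρ, w - z ≠ 0 := by
      intro z hz h0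
      rw [sub_eq_zero] at h0
      rw [Metric.mem_closedBall, Complex.dist_eq] at hz
      rw [← h0] at hz
      exact absurd hz (not_le.2 hgt)
    refine Complex.circleIntegral_eq_zero_of_differentiable_on_off_countable hρ.le
      countable_empty ?_ ?_
    · exact (continuousOn_const.sub continuousOn_id).inv₀ hne
    · intro z hz
      exact ((differentiableAt_const w).sub differentiableAt_id).inv
        (hne z (Metric.ball_subset_closedBall hz.1))

theorem aux_spectrum_eq {d : ℕ} {A : Matrix (Fin d) (Fin d) ℂ} (hA : A.IsHermitian) :
    spectrum ℂ A = Set.range (fun i => (hA.eigenvalues i : ℂ)) := by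
  set U : Matrix (Fin d) (Fin d) ℂ := (hA.eigenvectorUnitary : Matrix (Fin d) (Fin d) ℂ)
  have hU1 : U * star U = 1 := Matrix.mem_unitaryGroup_iff.mp hA.eigenvectorUnitary.2
  have hU2 : star U * U = 1 := Matrix.mem_unitaryGroup_iff'.mp hA.eigenvectorUnitary.2
  set u : (Matrix (Fin d) (Fin d) ℂ)ˣ := ⟨U, star U, hU1, hU2⟩ with hu
  have hconj : spectrum ℂ A =
      spectrum ℂ (diagonal ((↑) ∘ hA.eigenvalues) : Matrix (Fin d) (Fin d) ℂ) := by
    conv_lhs => rw [hA.spectral_theorem]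
    exact spectrum.units_conjugate (u := u)
  rw [hconj, spectrum_diagonal]
  rfl

theorem aux_isUnit_sub_smul {d : ℕ} {A : Matrix (Fin d) (Fin d) ℂ} (hA : A.IsHermitian) {z : ℂ}
    (h : ∀ i, (hA.eigenvalues i : ℂ) ≠ z) : IsUnit (A - z • 1) := by
  have hz : z ∉ spectrum ℂ A := by
    rw [aux_spectrum_eq hA]
    rintro ⟨i, hi⟩
    exact h i hi
  rw [spectrum.notMem_iff] at hz
  have : A - z • 1 = -(algebraMap ℂ (Matrix (Fin d) (Fin d) ℂ) z - A) := by
    rw [Algebra.algebraMap_eq_smul_one, neg_sub]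
  rw [this]
  exact hz.neg

theorem aux_resolvent_circleIntegral {d : ℕ} {A : Matrix (Fin d) (Fin d) ℂ}
    (hA : A.IsHermitian) (lam : ℝ) {c : ℂ} {ρ : ℝ} (hρ : 0 < ρ)
    (hcond : ∀ i, (hA.eigenvalues i = lam → ‖(hA.eigenvalues i : ℂ) - c‖ < ρ) ∧
      (hA.eigenvalues i ≠ lam → ρ < ‖(hA.eigenvalues i : ℂ) - c‖)) :
    (∮ z in C(c, ρ), (A - z • 1)⁻¹) =
      (-(2 * Real.pi * Complex.I)) • ((hA.eigenvectorUnitary : Matrix (Fin d) (Fin d) ℂ) *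
        diagonal (fun i => if hA.eigenvalues i = lam then 1 else 0) *
        star (hA.eigenvectorUnitary : Matrix (Fin d) (Fin d) ℂ)) := by
  set U : Matrix (Fin d) (Fin d) ℂ := (hA.eigenvectorUnitary : Matrix (Fin d) (Fin d) ℂ) with hU
  set ev : Fin d → ℝ := hA.eigenvalues with hev
  have hU1 : U * star U = 1 := Matrix.mem_unitaryGroup_iff.mp hA.eigenvectorUnitary.2
  have hU2 : star U * U = 1 := Matrix.mem_unitaryGroup_iff'.mp hA.eigenvectorUnitary.2
  have habs : ∀ i, ‖(ev i : ℂ) - c‖ ≠ ρ := by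
    intro i
    by_cases hi : ev i = lam
    · exact ((hcond i).1 hi).ne
    · exact ((hcond i).2 hi).ne'
  have hne : ∀ z ∈ Metric.sphere c ρ, ∀ i, (ev i : ℂ) - z ≠ 0 := by
    intro z hz i h0
    rw [sub_eq_zero] at h0
    rw [Metric.mem_sphere, Complex.dist_eq] at hz
    exact habs i (by rw [h0]; exact hz)
  set Dclm : (Fin d → ℂ) →L[ℂ] Matrix (Fin d) (Fin d) ℂ :=
    LinearMap.toContinuousLinearMap (Matrix.diagonalLinearMap (Fin d) ℂ ℂ) with hD
  set Φ : (Fin d → ℂ) →L[ℂ] Matrix (Fin d) (Fin d) ℂ :=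
    (ContinuousLinearMap.mulLeftRight ℂ (Matrix (Fin d) (Fin d) ℂ) U (star U)).comp Dclm with hΦ
  have hΦ_apply : ∀ v : Fin d → ℂ, Φ v = U * diagonal v * star U := fun v => rfl
  set g : ℂ → (Fin d → ℂ) := fun z i => ((ev i : ℂ) - z)⁻¹ with hg
  have hres : ∀ z ∈ Metric.sphere c ρ, (A - z • 1)⁻¹ = Φ (g z) := by
    intro z hz
    have hdiag : diagonal ((↑) ∘ ev : Fin d → ℂ) - z • 1 = diagonal (fun i => (ev i : ℂ) - z) := by
      rw [smul_one_eq_diagonal, ← diagonal_sub]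
      rfl
    have h1 : A - z • 1 = U * diagonal (fun i => (ev i : ℂ) - z) * star U := by
      rw [← hdiag, Matrix.mul_sub, Matrix.sub_mul]
      congr 1
      · exact hA.spectral_theorem
      · rw [Matrix.mul_smul, Matrix.smul_mul, mul_one, hU1]
    rw [hΦ_apply, h1]
    apply Matrix.inv_eq_right_inv
    calc U * diagonal (fun i => (ev i : ℂ) - z) * star U * (U * diagonal (g z) * star U)
        = U * (diagonal (fun i => (ev i : ℂ) - z) * ((star U * U) *
            (diagonal (g z) * star U))) := by
          simp only [Matrix.mul_assoc]
      _ = U * (diagonal (fun i => (ev i : ℂ) - z) * diagonal (g z)) * star U := by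
          rw [hU2, one_mul]
          simp only [Matrix.mul_assoc]
      _ = 1 := by
          rw [diagonal_mul_diagonal]
          have : (fun i => ((ev i : ℂ) - z) * g z i) = fun _ => (1 : ℂ) := by
            funext i
            exact mul_inv_cancel₀ (hne z hz i)
          rw [this, diagonal_one, mul_one, hU1]
  have hgcont : ContinuousOn g (Metric.sphere c ρ) := by
    rw [continuousOn_pi]
    intro i
    exact (continuousOn_const.sub continuousOn_id).inv₀ (fun z hz => hne z hz i)
  have hgint : CircleIntegrable g c ρ := hgcont.circleIntegrable hρ.le
  have h2 : (∮ z in C(c, ρ), (A - z • 1)⁻¹) = ∮ z in C(c, ρ), Φ (g z) :=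
    circleIntegral.integral_congr hρ.le (fun z hz => hres z hz)
  rw [h2, aux_circleIntegral_CLM Φ hgint]
  have h3 : (∮ z in C(c, ρ), g z) =
      (-(2 * Real.pi * Complex.I)) • fun i => if ev i = lam then (1 : ℂ) else 0 := by
    funext i
    have h4 : (∮ z in C(c, ρ), g z) i =
        ∮ z in C(c, ρ), ((ev i : ℂ) - z)⁻¹ :=
      (aux_circleIntegral_CLM (ContinuousLinearMap.proj (R := ℂ)
        (φ := fun _ : Fin d => ℂ) i) hgint).symm
    rw [Pi.smul_apply, h4, aux_scalar_circleIntegral hρ (habs i)]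
    by_cases hi : ev i = lam
    · rw [if_pos ((hcond i).1 hi), if_pos hi, smul_eq_mul, mul_one]
    · rw [if_neg (not_lt.2 ((hcond i).2 hi).le), if_neg hi, smul_eq_mul, mul_zero]
  rw [h3, Φ.map_smul, hΦ_apply]

theorem aux_contDiff_circleMap (c : ℂ) (R : ℝ) : ContDiff ℝ ∞ (circleMap c R) := by
  unfold circleMap
  exact contDiff_const.add (contDiff_const.mul
    ((Complex.ofRealCLM.contDiff.mul contDiff_const).cexp))

end AuxCircle

/-- Smoothness and `ε`-independent bounds for all derivatives of the Riesz spectral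
projector `Q(t)` associated with a gapped simple eigenvalue `λ(t)` of a smooth,
uniformly bounded Hermitian family `H(t)`. -/
theorem stmt_11 {d : ℕ} (T Δ : ℝ) (hT : 0 < T) (hΔ : 0 < Δ)
    (H : ℝ → Matrix (Fin d) (Fin d) ℂ)
    (hsm : ContDiffOn ℝ ∞ H (Icc 0 T))
    (hherm : ∀ t ∈ Icc (0:ℝ) T, (H t).IsHermitian)
    (hbd : ∀ k : ℕ, ∃ M : ℝ, ∀ t ∈ Icc (0:ℝ) T, ‖iteratedDerivWithin k H (Icc 0 T) t‖ ≤ M)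
    (lam : ℝ → ℝ) (hlam : ContinuousOn lam (Icc 0 T))
    (heig : ∀ t ∈ Icc (0:ℝ) T, Module.End.HasEigenvalue (Matrix.toLin' (H t)) ((lam t : ℂ)))
    (hsimple : ∀ t ∈ Icc (0:ℝ) T,
      Module.finrank ℂ (Module.End.eigenspace (Matrix.toLin' (H t)) ((lam t : ℂ))) = 1)
    (hgap : ∀ t ∈ Icc (0:ℝ) T, ∀ μ ∈ spectrum ℂ (H t), μ ≠ (lam t : ℂ) →
      Δ ≤ ‖μ - (lam t : ℂ)‖)
    (Q : ℝ → Matrix (Fin d) (Fin d) ℂ)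
    (hQ : ∀ t, Q t = (-(2 * Real.pi * Complex.I)⁻¹) •
      (∮ z in C((lam t : ℂ), Δ / 2), (H t - z • 1)⁻¹)) :
    ContDiffOn ℝ ∞ Q (Icc 0 T) ∧
    ∀ k : ℕ, ∃ C : ℝ, ∀ t ∈ Icc (0:ℝ) T, ‖iteratedDerivWithin k Q (Icc 0 T) t‖ ≤ C := by
  have hρ : 0 < Δ / 2 := by linarith
  have hev_gap : ∀ t, ∀ ht : t ∈ Icc (0:ℝ) T, ∀ i,
      (hherm t ht).eigenvalues i ≠ lam t →
      Δ ≤ ‖((hherm t ht).eigenvalues i : ℂ) - (lam t : ℂ)‖ := by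
    intro t ht i hi
    apply hgap t ht _ (by rw [aux_spectrum_eq (hherm t ht)]; exact ⟨i, rfl⟩)
    intro h
    exact hi (Complex.ofReal_inj.mp h)
  have cond1 : ∀ t, ∀ ht : t ∈ Icc (0:ℝ) T, ∀ i,
      ((hherm t ht).eigenvalues i = lam t →
        ‖((hherm t ht).eigenvalues i : ℂ) - (lam t : ℂ)‖ < Δ / 2) ∧
      ((hherm t ht).eigenvalues i ≠ lam t →
        Δ / 2 < ‖((hherm t ht).eigenvalues i : ℂ) - (lam t : ℂ)‖) := by
    intro t ht i
    constructor
    · intro hi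
      rw [hi]
      simpa using hρ
    · intro hi
      have := hev_gap t ht i hi
      linarith
  have hcd : ContDiffOn ℝ ∞ Q (Icc 0 T) := by
    intro t₀ ht₀
    have hcw := hlam t₀ ht₀
    rw [Metric.continuousWithinAt_iff] at hcw
    obtain ⟨δ, hδpos, hδ⟩ := hcw (Δ / 4) (by linarith)
    set lo := max 0 (t₀ - δ / 2) with hlo_def
    set hi := min T (t₀ + δ / 2) with hhi_def
    have hsub : Icc lo hi ⊆ Icc 0 T := Icc_subset_Icc (le_max_left _ _) (min_le_left _ _)
    have ht₀s : t₀ ∈ Icc lo hi := ⟨max_le ht₀.1 (by linarith), le_min ht₀.2 (by linarith)⟩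
    have hlohi : lo < hi := by
      rcases lt_or_ge 0 t₀ with h | h
      · exact lt_of_lt_of_le (max_lt h (by linarith)) ht₀s.2
      · have ht00 : t₀ = 0 := le_antisymm h ht₀.1
        have hl0 : lo = 0 := by
          rw [hlo_def, ht00]
          exact max_eq_left (by linarith)
        rw [hl0, hhi_def, ht00]
        exact lt_min hT (by linarith)
    have hmemδ : ∀ t ∈ Icc lo hi, |lam t - lam t₀| < Δ / 4 := by
      intro t ht
      have h1 : t ∈ Icc 0 T := hsub ht
      have h2 : dist t t₀ < δ := by
        have hl : t₀ - δ / 2 ≤ t := le_trans (le_max_right _ _) ht.1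
        have hr : t ≤ t₀ + δ / 2 := le_trans ht.2 (min_le_right _ _)
        rw [Real.dist_eq, abs_lt]
        constructor <;> linarith
      simpa [Real.dist_eq] using hδ h1 h2
    set cc : ℂ := (lam t₀ : ℂ) with hcc
    have cond2 : ∀ t, ∀ hts : t ∈ Icc lo hi, ∀ i,
        ((hherm t (hsub hts)).eigenvalues i = lam t →
          ‖((hherm t (hsub hts)).eigenvalues i : ℂ) - cc‖ < Δ / 2) ∧
        ((hherm t (hsub hts)).eigenvalues i ≠ lam t →
          Δ / 2 < ‖((hherm t (hsub hts)).eigenvalues i : ℂ) - cc‖) := by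
      intro t hts i
      have ht : t ∈ Icc 0 T := hsub hts
      have hlt : |lam t - lam t₀| < Δ / 4 := hmemδ t hts
      constructor
      · intro hi
        rw [hi]
        have he : ((lam t : ℂ) - cc) = ((lam t - lam t₀ : ℝ) : ℂ) := by
          rw [hcc]
          push_cast
          ring
        rw [he, Complex.norm_real, Real.norm_eq_abs]
        linarith
      · intro hi
        have h1 := hev_gap t ht i hi
        have htri := norm_sub_le_norm_sub_add_norm_sub (((hherm t ht).eigenvalues i : ℂ)) cc ((lam t : ℂ))
        have h2 : ‖cc - (lam t : ℂ)‖ < Δ / 4 := by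
          have he : (cc - (lam t : ℂ)) = ((lam t₀ - lam t : ℝ) : ℂ) := by
            rw [hcc]
            push_cast
            ring
          rw [he, Complex.norm_real, Real.norm_eq_abs, abs_sub_comm]
          linarith
        linarith
    set F : ℝ → ℝ → Matrix (Fin d) (Fin d) ℂ := fun t θ =>
      (circleMap 0 (Δ / 2) θ * Complex.I) • (H t - circleMap cc (Δ / 2) θ • 1)⁻¹ with hF
    have hGF : ∀ t, (∮ z in C(cc, Δ / 2), (H t - z • 1)⁻¹) =
        ∫ θ in (0 : ℝ)..(2 * Real.pi), F t θ := by
      intro t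
      simp only [circleIntegral, deriv_circleMap, hF]
    have hunit : ∀ t, ∀ hts : t ∈ Icc lo hi, ∀ θ : ℝ,
        IsUnit (H t - circleMap cc (Δ / 2) θ • 1) := by
      intro t hts θ
      have ht : t ∈ Icc 0 T := hsub hts
      apply aux_isUnit_sub_smul (hherm t ht)
      intro i h0
      have hz : ‖circleMap cc (Δ / 2) θ - cc‖ = Δ / 2 := by
        simpa [Complex.dist_eq] using circleMap_mem_sphere cc hρ.le θ
      rw [← h0] at hz
      rcases cond2 t hts i with ⟨c1, c2⟩
      by_cases hi : (hherm t ht).eigenvalues i = lam t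
      · exact absurd hz (ne_of_lt (c1 hi))
      · exact absurd hz (ne_of_gt (c2 hi))
    have hsmulC : ContDiff ℝ ∞ fun q : ℂ × Matrix (Fin d) (Fin d) ℂ => q.1 • q.2 :=
      isBoundedBilinearMap_smul.contDiff
    have hFsm : ContDiffOn ℝ ∞ (Function.uncurry F) (Icc lo hi ×ˢ (univ : Set ℝ)) := by
      have hinner : ContDiffOn ℝ ∞
          (fun p : ℝ × ℝ => H p.1 - circleMap cc (Δ / 2) p.2 • (1 : Matrix (Fin d) (Fin d) ℂ))
          (Icc lo hi ×ˢ (univ : Set ℝ)) := by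
        apply ContDiffOn.sub
        · exact hsm.comp contDiff_fst.contDiffOn (fun p hp => hsub hp.1)
        · exact (hsmulC.comp (((aux_contDiff_circleMap cc (Δ / 2)).comp contDiff_snd).prodMk
            contDiff_const)).contDiffOn
      intro p hp
      have hA : ContDiffWithinAt ℝ ∞ (fun p : ℝ × ℝ => circleMap 0 (Δ / 2) p.2 * Complex.I)
          (Icc lo hi ×ˢ (univ : Set ℝ)) p :=
        (((aux_contDiff_circleMap 0 (Δ / 2)).mul contDiff_const).comp
          contDiff_snd).contDiffAt.contDiffWithinAt
      have hB : ContDiffWithinAt ℝ ∞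
          (fun p : ℝ × ℝ => (H p.1 - circleMap cc (Δ / 2) p.2 • (1 : Matrix (Fin d) (Fin d) ℂ))⁻¹)
          (Icc lo hi ×ˢ (univ : Set ℝ)) p := by
        have hu := hunit p.1 hp.1 p.2
        have h5 : ContDiffAt ℝ ∞ Ring.inverse (H p.1 - circleMap cc (Δ / 2) p.2 • 1) :=
          hu.unit_spec ▸ contDiffAt_ringInverse ℝ hu.unit
        have h6 := h5.comp_contDiffWithinAt p (hinner p hp)
        exact h6.congr (fun q _ => Matrix.nonsing_inv_eq_ringInverse _)
          (Matrix.nonsing_inv_eq_ringInverse _)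
      exact hsmulC.contDiffAt.comp_contDiffWithinAt p (hA.prodMk hB)
    have hGsm := aux_contDiffOn_parametric_intervalIntegral hlohi
      (by positivity : (0:ℝ) ≤ 2 * Real.pi) hFsm
    have hQeq : ∀ t ∈ Icc lo hi, Q t = (-(2 * Real.pi * Complex.I)⁻¹) •
        ∫ θ in (0 : ℝ)..(2 * Real.pi), F t θ := by
      intro t hts
      have ht : t ∈ Icc 0 T := hsub hts
      have e1 := aux_resolvent_circleIntegral (hherm t ht) (lam t) hρ (cond1 t ht)
      have e2 := aux_resolvent_circleIntegral (hherm t ht) (lam t) (c := cc) hρ (cond2 t hts)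
      rw [hQ t, e1, ← e2, hGF t]
    exact ((hGsm.const_smul _).congr hQeq t₀ ht₀s).mono_of_mem_nhdsWithin (by
      have he : Icc lo hi = Icc 0 T ∩ Icc (t₀ - δ / 2) (t₀ + δ / 2) := Icc_inter_Icc.symm
      rw [he]
      exact inter_mem_nhdsWithin _ (Icc_mem_nhds (by linarith) (by linarith)))
  refine ⟨hcd, fun k => ?_⟩
  have hcont := hcd.continuousOn_iteratedDerivWithin
    (by exact_mod_cast le_top : (k : WithTop ℕ∞) ≤ ∞) (uniqueDiffOn_Icc hT)
  obtain ⟨C, hC⟩ := isCompact_Icc.exists_bound_of_continuousOn hcont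
  exact ⟨C, hC⟩
end

section
/- Let ε > 0, let H : [0,T] → Matrix (Fin d) (Fin d) ℂ be a continuous family of Hermitian matrices, and let Q : [0,T] → Matrix (Fin d) (Fin d) ℂ be a continuously differentiable family of Hermitian projectors with Q(t) H(t) = H(t) Q(t) for all t. Let θ : [0,T] → ℝ be continuous, and let φ_B : [0,T] → ℂ^d solve iε ∂ₜφ_B(t) = (H(t) − θ(t) I + iε [Q̇(t), Q(t)]) φ_B(t) with Q(0) φ_B(0) = φ_B(0). Then Q(t) φ_B(t) = φ_B(t) for all t ∈ [0,T]. In particular this holds when θ(t) = φ(t)* H(t) φ(t) for the solution φ of the parallel transport dynamics. -/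
open scoped Matrix Matrix.Norms.L2Operator InnerProductSpace
open Matrix Set

noncomputable def gEq {d : ℕ} : Matrix (Fin d) (Fin d) ℂ ≃ₗ[ℂ]
    (EuclideanSpace ℂ (Fin d) →L[ℂ] EuclideanSpace ℂ (Fin d)) :=
  Matrix.toEuclideanLin.trans LinearMap.toContinuousLinearMap

noncomputable def eCLM {d : ℕ} : Matrix (Fin d) (Fin d) ℂ →L[ℂ]
    (EuclideanSpace ℂ (Fin d) →L[ℂ] EuclideanSpace ℂ (Fin d)) :=
  LinearMap.toContinuousLinearMap (gEq (d := d)).toLinearMap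

lemma eCLM_apply {d : ℕ} (A : Matrix (Fin d) (Fin d) ℂ) (x : EuclideanSpace ℂ (Fin d)) :
    eCLM A x = toEuclideanLin A x := rfl

lemma eCLM_eq_toEuclideanCLM {d : ℕ} (A : Matrix (Fin d) (Fin d) ℂ) :
    eCLM A = toEuclideanCLM (n := Fin d) (𝕜 := ℂ) A := by
  ext1 x
  rw [eCLM_apply, ← coe_toEuclideanCLM_eq_toEuclideanLin]
  rfl

lemma eCLM_mul {d : ℕ} (A B : Matrix (Fin d) (Fin d) ℂ) (x : EuclideanSpace ℂ (Fin d)) :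
    eCLM (A * B) x = eCLM A (eCLM B x) := by
  simp [eCLM_eq_toEuclideanCLM, _root_.map_mul]

lemma eCLM_one {d : ℕ} (x : EuclideanSpace ℂ (Fin d)) :
    eCLM (1 : Matrix (Fin d) (Fin d) ℂ) x = x := by
  simp [eCLM_eq_toEuclideanCLM, _root_.map_one]

lemma eCLM_norm {d : ℕ} (A : Matrix (Fin d) (Fin d) ℂ) : ‖eCLM A‖ = ‖A‖ := by
  rw [Matrix.l2_opNorm_def]; rfl

/-- Key noncommutative-algebra identity for projectors: if `q² = q`, `q'q + qq' = q'`
and `q` commutes with `h`, then `q' + (q-1)(h + [q',q]) = (h + [q',q])(q-1)`. -/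
lemma aux_key {R : Type*} [Ring R] {q q' h : R} (hq : q * q = q)
    (hd : q' * q + q * q' = q') (hqh : q * h = h * q) :
    q' + (q - 1) * (h + (q' * q - q * q')) = (h + (q' * q - q * q')) * (q - 1) := by
  have h0 : q * q' * q + q * q' = 0 + q * q' := by
    have := congrArg (fun X => q * X) hd
    simp only [mul_add, ← mul_assoc, hq] at this
    rw [zero_add]; exact this
  have hqq'q : q * q' * q = 0 := add_right_cancel h0
  have h1 : q * (h + (q' * q - q * q')) = h * q - q * q' := by
    rw [mul_add, mul_sub, ← mul_assoc, ← mul_assoc, hqq'q, hq, hqh, zero_sub]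
    abel
  have h2 : (h + (q' * q - q * q')) * q = h * q + q' * q := by
    rw [add_mul, sub_mul, hqq'q, mul_assoc, hq, sub_zero]
  nth_rewrite 1 [← hd]
  rw [sub_mul, mul_sub, one_mul, mul_one, h1, h2]
  abel

/-- If `Q(t)` is a `C¹` family of Hermitian projectors commuting with `H(t)`, and `φ_B`
solves `iε ∂ₜφ_B = (H − θ I + iε [Q̇, Q]) φ_B` with `Q(0) φ_B(0) = φ_B(0)`, then
`Q(t) φ_B(t) = φ_B(t)` for all `t ∈ [0,T]`. -/
theorem stmt_13 {d : ℕ} (T ε : ℝ) (hT : 0 ≤ T) (hε : 0 < ε)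
    (H : ℝ → Matrix (Fin d) (Fin d) ℂ)
    (hHc : ContinuousOn H (Icc 0 T))
    (hHerm : ∀ t ∈ Icc (0:ℝ) T, (H t).IsHermitian)
    (Q Q' : ℝ → Matrix (Fin d) (Fin d) ℂ)
    (hQ : ∀ t ∈ Icc (0:ℝ) T, HasDerivWithinAt Q (Q' t) (Icc 0 T) t)
    (hQ'c : ContinuousOn Q' (Icc 0 T))
    (hproj : ∀ t ∈ Icc (0:ℝ) T, Q t * Q t = Q t)
    (hherm : ∀ t ∈ Icc (0:ℝ) T, (Q t)ᴴ = Q t)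
    (hcomm : ∀ t ∈ Icc (0:ℝ) T, Q t * H t = H t * Q t)
    (θ : ℝ → ℝ) (hθ : ContinuousOn θ (Icc 0 T))
    (φB φB' : ℝ → EuclideanSpace ℂ (Fin d))
    (hderiv : ∀ t ∈ Icc (0:ℝ) T, HasDerivWithinAt φB (φB' t) (Icc 0 T) t)
    (hODE : ∀ t ∈ Icc (0:ℝ) T, (Complex.I * ε) • φB' t =
      toEuclideanLin
        (H t - (θ t : ℂ) • 1 + (Complex.I * ε) • (Q' t * Q t - Q t * Q' t)) (φB t))
    (hinit : toEuclideanLin (Q 0) (φB 0) = φB 0) :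
    ∀ t ∈ Icc (0:ℝ) T, toEuclideanLin (Q t) (φB t) = φB t := by
  classical
  have hiε : (Complex.I * (ε : ℂ)) ≠ 0 := by
    simp [Complex.I_ne_zero, Complex.ofReal_ne_zero, ne_of_gt hε]
  set c : ℂ := (Complex.I * (ε : ℂ))⁻¹ with hc
  set A : ℝ → Matrix (Fin d) (Fin d) ℂ :=
    fun t => c • (H t - (θ t : ℂ) • 1) + (Q' t * Q t - Q t * Q' t) with hA
  set ψ : ℝ → EuclideanSpace ℂ (Fin d) := fun t => eCLM (Q t - 1) (φB t) with hψ
  -- φB' t = eCLM (A t) (φB t)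
  have hφ' : ∀ t ∈ Icc (0:ℝ) T, φB' t = eCLM (A t) (φB t) := by
    intro t ht
    have h1 := hODE t ht
    have h2 : eCLM (A t) (φB t)
        = c • (toEuclideanLin (H t - (θ t : ℂ) • 1
            + (Complex.I * ε) • (Q' t * Q t - Q t * Q' t)) (φB t)) := by
      rw [eCLM_apply]
      have h3 : A t = c • (H t - (θ t : ℂ) • 1
          + (Complex.I * ε) • (Q' t * Q t - Q t * Q' t)) := by
        rw [hA, smul_add, smul_smul, inv_mul_cancel₀ hiε, one_smul]
      rw [h3, _root_.map_smul, LinearMap.smul_apply]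
    rw [h2, ← h1, smul_smul, inv_mul_cancel₀ hiε, one_smul]
  -- derivative of ψ within Icc
  have hψd : ∀ t ∈ Icc (0:ℝ) T, HasDerivWithinAt ψ
      (eCLM (Q' t) (φB t) + eCLM (Q t - 1) (φB' t)) (Icc 0 T) t := by
    intro t ht
    have hsub : HasDerivWithinAt (fun s => Q s - 1) (Q' t) (Icc 0 T) t :=
      (hQ t ht).sub_const 1
    have hbl := (eCLM (d := d)).isBoundedBilinearMap
    have hB := (hbl.hasFDerivAt (Q t - 1, φB t)).restrictScalars ℝ
    have hst : HasDerivWithinAt (fun s => (Q s - 1, φB s)) (Q' t, φB' t) (Icc 0 T) t :=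
      hsub.prodMk (hderiv t ht)
    have hcomp := hB.comp_hasDerivWithinAt t hst
    simpa [hψ, Function.comp_def, hbl.deriv_apply, add_comm] using hcomp
  -- ψ' = A ψ on Ico, within Ici
  have hψ' : ∀ t ∈ Ico (0:ℝ) T, HasDerivWithinAt ψ (eCLM (A t) (ψ t)) (Ici t) t := by
    intro t ht
    have ht' : t ∈ Icc (0:ℝ) T := Ico_subset_Icc_self ht
    have hTpos : (0:ℝ) < T := lt_of_le_of_lt ht.1 ht.2
    have hu : UniqueDiffWithinAt ℝ (Icc (0:ℝ) T) t := (uniqueDiffOn_Icc hTpos) t ht'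
    have hd : Q' t * Q t + Q t * Q' t = Q' t := by
      have h1 : HasDerivWithinAt (fun s => Q s * Q s)
          (Q' t * Q t + Q t * Q' t) (Icc 0 T) t := (hQ t ht').mul (hQ t ht')
      have h2 : HasDerivWithinAt (fun s => Q s * Q s) (Q' t) (Icc 0 T) t :=
        (hQ t ht').congr (fun s hs => hproj s hs) (hproj t ht')
      exact (h1.derivWithin hu).symm.trans (h2.derivWithin hu)
    have hqh : Q t * (c • (H t - (θ t : ℂ) • 1))
        = (c • (H t - (θ t : ℂ) • 1)) * Q t := by
      rw [mul_smul_comm, smul_mul_assoc]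
      congr 1
      rw [mul_sub, sub_mul, hcomm t ht', mul_smul_comm, smul_mul_assoc, mul_one, one_mul]
    have key : Q' t + (Q t - 1) * A t = A t * (Q t - 1) :=
      aux_key (hproj t ht') hd hqh
    have hderiv_eq : eCLM (Q' t) (φB t) + eCLM (Q t - 1) (φB' t) = eCLM (A t) (ψ t) := by
      rw [hφ' t ht', ← eCLM_mul]
      have h4 : eCLM (Q' t) (φB t) + eCLM ((Q t - 1) * A t) (φB t)
          = eCLM (Q' t + (Q t - 1) * A t) (φB t) := by
        rw [map_add, ContinuousLinearMap.add_apply]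
      rw [h4, key, eCLM_mul]
    have h := hψd t ht'
    rw [hderiv_eq] at h
    exact h.mono_of_mem_nhdsWithin (Icc_mem_nhdsGE_of_mem ht)
  -- continuity and bound
  have hQc : ContinuousOn Q (Icc 0 T) := fun t ht => (hQ t ht).continuousWithinAt
  have hAc : ContinuousOn A (Icc 0 T) := by
    apply ContinuousOn.add
    · exact (hHc.sub ((Complex.continuous_ofReal.comp_continuousOn hθ).smul
        continuousOn_const)).const_smul c
    · exact (hQ'c.mul hQc).sub (hQc.mul hQ'c)
  obtain ⟨C, hC⟩ := isCompact_Icc.exists_bound_of_continuousOn hAc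
  have hψc : ContinuousOn ψ (Icc 0 T) := fun t ht => (hψd t ht).continuousWithinAt
  have hψ0 : ψ 0 = 0 := by
    rw [hψ]
    show eCLM (Q 0 - 1) (φB 0) = 0
    rw [map_sub, ContinuousLinearMap.sub_apply, eCLM_one, sub_eq_zero, eCLM_apply]
    exact hinit
  have hbound : ∀ x ∈ Ico (0:ℝ) T, ‖eCLM (A x) (ψ x)‖ ≤ C * ‖ψ x‖ + 0 := by
    intro x hx
    rw [add_zero]
    calc ‖eCLM (A x) (ψ x)‖ ≤ ‖eCLM (A x)‖ * ‖ψ x‖ := (eCLM (A x)).le_opNorm _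
      _ = ‖A x‖ * ‖ψ x‖ := by rw [eCLM_norm]
      _ ≤ C * ‖ψ x‖ :=
          mul_le_mul_of_nonneg_right (hC x (Ico_subset_Icc_self hx)) (norm_nonneg _)
  have hg := norm_le_gronwallBound_of_norm_deriv_right_le hψc hψ'
    (le_of_eq (by rw [hψ0, norm_zero])) hbound
  intro t ht
  have h := hg t ht
  rw [gronwallBound_ε0, zero_mul] at h
  have hz : ψ t = 0 := norm_le_zero_iff.mp h
  rw [hψ] at hz
  have hz2 : eCLM (Q t - 1) (φB t) = 0 := hz
  rw [show eCLM (Q t - 1) (φB t) = toEuclideanLin (Q t) (φB t) - φB t by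
    rw [map_sub, ContinuousLinearMap.sub_apply, eCLM_one, eCLM_apply]] at hz2
  exact sub_eq_zero.mp hz2
end

section
/- Let H : [0,T] → Matrix (Fin d) (Fin d) ℂ be an infinitely differentiable family of Hermitian matrices such that for every k ≥ 0 there is a bound M_k with ‖H^{(k)}(t)‖ ≤ M_k for all t ∈ [0,T]. For each ε ∈ (0,1], let ψ^ε solve the Schrödinger equation iε ∂ₜψ^ε(t) = H(t) ψ^ε(t) with ‖ψ^ε(0)‖ = 1. Then for every k ≥ 0 there is a constant C_k, depending only on k and the bounds M_0, …, M_k but not on ε, such that ‖(ψ^ε)^{(k+1)}(t)‖ ≤ C_k / ε^{k+1} for all t ∈ [0,T]. -/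
open scoped Matrix Matrix.Norms.L2Operator InnerProductSpace ContDiff
open Matrix Set

set_option maxHeartbeats 4000000
set_option synthInstance.maxHeartbeats 400000

/-- The application of a matrix (with L2 operator norm) to a Euclidean vector, as a
continuous real-bilinear map. -/
noncomputable def matCLM (d : ℕ) :
    Matrix (Fin d) (Fin d) ℂ →L[ℝ] (EuclideanSpace ℂ (Fin d) →L[ℝ] EuclideanSpace ℂ (Fin d)) :=
  LinearMap.mkContinuous
    { toFun := fun A => (Matrix.toEuclideanCLM (𝕜 := ℂ) A).restrictScalars ℝ
      map_add' := fun A B => by ext v; simp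
      map_smul' := fun c A => by
        refine ContinuousLinearMap.ext fun v => ?_
        show toEuclideanCLM (𝕜 := ℂ) (c • A) v = c • (toEuclideanCLM (𝕜 := ℂ) A v)
        have hA : (c • A) = ((c : ℂ) • A) := by
          ext i j; simp [Complex.real_smul]
        rw [hA, _root_.map_smul]
        show ((c:ℂ)) • (toEuclideanCLM (𝕜 := ℂ) A v) = c • (toEuclideanCLM (𝕜 := ℂ) A v)
        rw [Complex.coe_smul] }
    1 (fun A => by
      rw [one_mul]
      show ‖(Matrix.toEuclideanCLM (𝕜 := ℂ) A).restrictScalars ℝ‖ ≤ ‖A‖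
      rw [ContinuousLinearMap.norm_restrictScalars]
      exact (Matrix.cstar_norm_def A).ge)

lemma matCLM_norm_le (d : ℕ) : ‖matCLM d‖ ≤ 1 :=
  LinearMap.mkContinuous_norm_le _ zero_le_one _

lemma matCLM_apply {d : ℕ} (A : Matrix (Fin d) (Fin d) ℂ) (v : EuclideanSpace ℂ (Fin d)) :
    matCLM d A v = toEuclideanLin A v := by
  show (Matrix.toEuclideanCLM (𝕜 := ℂ) A) v = toEuclideanLin A v
  rw [← Matrix.coe_toEuclideanCLM_eq_toEuclideanLin]
  rfl

/-- Derivative bounds for the Schrödinger dynamics: for a smooth, uniformly bounded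
Hermitian family `H(t)`, the solution of `iε ∂ₜψ = H ψ` with `‖ψ(0)‖ = 1` satisfies
`‖ψ^{(k+1)}(t)‖ ≤ C_k / ε^{k+1}` with `C_k` independent of `ε`. -/
theorem stmt_16 {d : ℕ} (T : ℝ) (hT : 0 < T)
    (H : ℝ → Matrix (Fin d) (Fin d) ℂ)
    (hsm : ContDiffOn ℝ ∞ H (Icc 0 T))
    (hherm : ∀ t ∈ Icc (0:ℝ) T, (H t).IsHermitian)
    (M : ℕ → ℝ)
    (hbd : ∀ k : ℕ, ∀ t ∈ Icc (0:ℝ) T, ‖iteratedDerivWithin k H (Icc 0 T) t‖ ≤ M k)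
    (ψ ψ' : ℝ → ℝ → EuclideanSpace ℂ (Fin d))
    (hSE : ∀ ε ∈ Ioc (0:ℝ) 1, ∀ t ∈ Icc (0:ℝ) T,
      HasDerivWithinAt (ψ ε) (ψ' ε t) (Icc 0 T) t ∧
      (Complex.I * ε) • ψ' ε t = toEuclideanLin (H t) (ψ ε t))
    (hinit : ∀ ε ∈ Ioc (0:ℝ) 1, ‖ψ ε 0‖ = 1) :
    ∀ k : ℕ, ∃ C : ℝ, ∀ ε ∈ Ioc (0:ℝ) 1, ∀ t ∈ Icc (0:ℝ) T,
      ‖iteratedDerivWithin (k + 1) (ψ ε) (Icc 0 T) t‖ ≤ C / ε ^ (k + 1) := by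
  have hsU : UniqueDiffOn ℝ (Icc (0:ℝ) T) := uniqueDiffOn_Icc hT
  have h0s : (0:ℝ) ∈ Icc (0:ℝ) T := ⟨le_refl 0, hT.le⟩
  have hM0 : ∀ j, 0 ≤ M j := fun j => le_trans (norm_nonneg _) (hbd j 0 h0s)
  set B := matCLM d with hB
  -- derivative formula
  have hder : ∀ ε ∈ Ioc (0:ℝ) 1, ∀ t ∈ Icc (0:ℝ) T,
      HasDerivWithinAt (ψ ε) ((Complex.I * ε)⁻¹ • B (H t) (ψ ε t)) (Icc 0 T) t := by
    intro ε hε t ht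
    obtain ⟨h1, h2⟩ := hSE ε hε t ht
    have hεne : (Complex.I * (ε:ℂ)) ≠ 0 := by
      simp [Complex.I_ne_zero, Complex.ofReal_ne_zero, ne_of_gt hε.1]
    have hval : ψ' ε t = (Complex.I * ε)⁻¹ • B (H t) (ψ ε t) := by
      rw [matCLM_apply, ← h2, smul_smul, inv_mul_cancel₀ hεne, one_smul]
    rwa [← hval]
  -- smoothness of ψ
  have hsmooth : ∀ ε ∈ Ioc (0:ℝ) 1, ∀ n : ℕ, ContDiffOn ℝ n (ψ ε) (Icc 0 T) := by
    intro ε hε n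
    induction n with
    | zero =>
      simp only [Nat.cast_zero, contDiffOn_zero]
      exact fun t ht => ((hder ε hε t ht).differentiableWithinAt).continuousWithinAt
    | succ n IH =>
      have hcast : ((n+1 : ℕ) : WithTop ℕ∞) = (n : WithTop ℕ∞) + 1 := by norm_cast
      rw [hcast, contDiffOn_succ_iff_derivWithin hsU]
      refine ⟨fun t ht => (hder ε hε t ht).differentiableWithinAt, ?_, ?_⟩
      · intro h; exact absurd h (by simp)
      · have hH : ContDiffOn ℝ n H (Icc 0 T) := hsm.of_le (by exact_mod_cast (le_top : (_ : ℕ∞) ≤ ⊤))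
        have hBH : ContDiffOn ℝ n (fun t => B (H t)) (Icc 0 T) :=
          (matCLM d).contDiff.comp_contDiffOn hH
        have hmain : ContDiffOn ℝ n
            (fun t => (Complex.I * (ε:ℂ))⁻¹ • B (H t) (ψ ε t)) (Icc 0 T) :=
          (hBH.clm_apply IH).const_smul _
        exact hmain.congr fun t ht => ((hder ε hε t ht).derivWithin (hsU t ht))
  have hsmooth' : ∀ ε ∈ Ioc (0:ℝ) 1, ContDiffOn ℝ ∞ (ψ ε) (Icc 0 T) :=
    fun ε hε => contDiffOn_infty.mpr (hsmooth ε hε)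
  -- norm preservation
  have hnorm1 : ∀ ε ∈ Ioc (0:ℝ) 1, ∀ t ∈ Icc (0:ℝ) T, ‖ψ ε t‖ = 1 := by
    intro ε hε t ht
    set F : ℝ → ℂ := fun u => (inner ℂ (ψ ε u) (ψ ε u) : ℂ) with hF
    have hFd : ∀ u ∈ Icc (0:ℝ) T, HasDerivWithinAt F 0 (Icc 0 T) u := by
      intro u hu
      have h1 := hder ε hε u hu
      have h2 := HasDerivWithinAt.inner ℂ h1 h1
      refine h2.congr_deriv ?_
      set c : ℂ := (Complex.I * (ε:ℂ))⁻¹ with hc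
      set w : EuclideanSpace ℂ (Fin d) := B (H u) (ψ ε u) with hw
      have hcc : (starRingEnd ℂ) c = -c := by
        rw [hc, map_inv₀, _root_.map_mul, Complex.conj_I, Complex.conj_ofReal, neg_mul, inv_neg]
      rw [inner_smul_right, inner_smul_left, hcc]
      have hw' : (inner ℂ w (ψ ε u) : ℂ) = inner ℂ (ψ ε u) w := by
        rw [hw, hB, matCLM_apply]
        exact (Matrix.isHermitian_iff_isSymmetric.mp (hherm u hu)) (ψ ε u) (ψ ε u)
      rw [hw']
      ring
    have hcon : ∀ u ∈ Icc (0:ℝ) T, F u = F 0 := by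
      apply constant_of_derivWithin_zero
      · exact fun u hu => (hFd u hu).differentiableWithinAt
      · intro u hu
        exact (hFd u (Ico_subset_Icc_self hu)).derivWithin (hsU u (Ico_subset_Icc_self hu))
    have h1 : F t = F 0 := hcon t ht
    have h3 : ‖ψ ε t‖^2 = ‖ψ ε 0‖^2 := by
      rw [← inner_self_eq_norm_sq (𝕜 := ℂ), ← inner_self_eq_norm_sq (𝕜 := ℂ)]
      exact congrArg RCLike.re h1
    rw [hinit ε hε] at h3
    have h4 : (‖ψ ε t‖ - 1) * (‖ψ ε t‖ + 1) = 0 := by nlinarith [h3]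
    rcases mul_eq_zero.mp h4 with h5 | h5
    · linarith
    · nlinarith [norm_nonneg (ψ ε t)]
  -- main induction
  have key : ∀ m : ℕ, ∃ C : ℝ, 0 ≤ C ∧ ∀ ε ∈ Ioc (0:ℝ) 1, ∀ t ∈ Icc (0:ℝ) T, ∀ j ≤ m,
      ‖iteratedDerivWithin j (ψ ε) (Icc 0 T) t‖ ≤ C / ε ^ j := by
    intro m
    induction m with
    | zero =>
      refine ⟨1, zero_le_one, fun ε hε t ht j hj => ?_⟩
      have hj0 : j = 0 := Nat.le_zero.mp hj
      subst hj0
      simp [iteratedDerivWithin_zero, hnorm1 ε hε t ht]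
    | succ m IH =>
      obtain ⟨C, hC0, hC⟩ := IH
      set S : ℝ := ∑ i ∈ Finset.range (m+1), (m.choose i : ℝ) * M i with hS
      have hS0 : 0 ≤ S :=
        Finset.sum_nonneg fun i _ => mul_nonneg (by positivity) (hM0 i)
      refine ⟨max C (C * S), le_trans hC0 (le_max_left _ _), ?_⟩
      intro ε hε t ht j hj
      have hε0 : (0:ℝ) < ε := hε.1
      have hε1 : ε ≤ 1 := hε.2
      rcases Nat.lt_or_ge j (m+1) with hj' | hj'
      · refine le_trans (hC ε hε t ht j (Nat.lt_succ_iff.mp hj')) ?_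
        gcongr
        exact le_max_left _ _
      · have hjm : j = m + 1 := le_antisymm hj hj'
        subst hjm
        have hψsm := hsmooth' ε hε
        have hFsm : ContDiffOn ℝ m (fun u => B (H u) (ψ ε u)) (Icc 0 T) := by
          have hH : ContDiffOn ℝ m H (Icc 0 T) := hsm.of_le (by exact_mod_cast (le_top : (_ : ℕ∞) ≤ ⊤))
          exact ((matCLM d).contDiff.comp_contDiffOn hH).clm_apply (hsmooth ε hε m)
        have heq : iteratedDerivWithin (m+1) (ψ ε) (Icc 0 T) t
            = (Complex.I * (ε:ℂ))⁻¹ •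
              iteratedDerivWithin m (fun u => B (H u) (ψ ε u)) (Icc 0 T) t := by
          rw [iteratedDerivWithin_succ']
          have h1 : Set.EqOn (derivWithin (ψ ε) (Icc 0 T))
              ((Complex.I * (ε:ℂ))⁻¹ • fun u => B (H u) (ψ ε u)) (Icc 0 T) :=
            fun u hu => (hder ε hε u hu).derivWithin (hsU u hu)
          rw [iteratedDerivWithin_congr h1 ht]
          exact iteratedDerivWithin_const_smul ht hsU _ (hFsm t ht)
        have hcnorm : ‖(Complex.I * (ε:ℂ))⁻¹‖ = ε⁻¹ := by
          rw [norm_inv, norm_mul, Complex.norm_I, one_mul, Complex.norm_real,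
            Real.norm_of_nonneg hε0.le]
        have hbil := (matCLM d).norm_iteratedFDerivWithin_le_of_bilinear (f := H) (g := ψ ε)
          hsm hψsm hsU ht (n := m) (by exact_mod_cast (le_top : (_ : ℕ∞) ≤ ⊤))
        simp only [norm_iteratedFDerivWithin_eq_norm_iteratedDerivWithin] at hbil
        have hsum : ∑ i ∈ Finset.range (m+1), (m.choose i : ℝ)
              * ‖iteratedDerivWithin i H (Icc 0 T) t‖
              * ‖iteratedDerivWithin (m - i) (ψ ε) (Icc 0 T) t‖
            ≤ S * (C / ε ^ m) := by
          rw [hS, Finset.sum_mul]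
          apply Finset.sum_le_sum
          intro i hi
          have h1 : ‖iteratedDerivWithin (m - i) (ψ ε) (Icc 0 T) t‖ ≤ C / ε ^ (m - i) :=
            hC ε hε t ht (m - i) (Nat.sub_le m i)
          have h2 : C / ε ^ (m - i) ≤ C / ε ^ m :=
            div_le_div_of_nonneg_left hC0 (pow_pos hε0 m)
              (pow_le_pow_of_le_one hε0.le hε1 (Nat.sub_le m i))
          calc (m.choose i : ℝ) * ‖iteratedDerivWithin i H (Icc 0 T) t‖
                * ‖iteratedDerivWithin (m - i) (ψ ε) (Icc 0 T) t‖
              ≤ (m.choose i : ℝ) * M i * (C / ε ^ m) := by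
                refine mul_le_mul ?_ (le_trans h1 h2) (norm_nonneg _)
                    (mul_nonneg (by positivity) (hM0 i))
                exact mul_le_mul_of_nonneg_left (hbd i t ht) (by positivity)
              _ = (m.choose i : ℝ) * M i * (C / ε ^ m) := rfl
        have hsum0 : (0:ℝ) ≤ ∑ i ∈ Finset.range (m+1), (m.choose i : ℝ)
              * ‖iteratedDerivWithin i H (Icc 0 T) t‖
              * ‖iteratedDerivWithin (m - i) (ψ ε) (Icc 0 T) t‖ :=
          Finset.sum_nonneg fun i _ => by positivity
        have hstep : ‖iteratedDerivWithin m (fun u => B (H u) (ψ ε u)) (Icc 0 T) t‖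
            ≤ S * (C / ε ^ m) := by
          refine le_trans hbil ?_
          refine le_trans (mul_le_mul_of_nonneg_right (matCLM_norm_le d) hsum0) ?_
          rw [one_mul]; exact hsum
        calc ‖iteratedDerivWithin (m+1) (ψ ε) (Icc 0 T) t‖
            = ε⁻¹ * ‖iteratedDerivWithin m (fun u => B (H u) (ψ ε u)) (Icc 0 T) t‖ := by
              rw [heq, norm_smul, hcnorm]
          _ ≤ ε⁻¹ * (S * (C / ε ^ m)) := by
              exact mul_le_mul_of_nonneg_left hstep (inv_nonneg.mpr hε0.le)
          _ = (C * S) / ε ^ (m+1) := by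
              field_simp
              ring
          _ ≤ max C (C * S) / ε ^ (m+1) := by
              gcongr
              exact le_max_right _ _
  intro k
  obtain ⟨C, _, hC⟩ := key (k+1)
  exact ⟨C, fun ε hε t ht => hC ε hε t ht (k+1) le_rfl⟩
end
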